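/- Decode correctness of merge: let T be a type symbol with c = c(T) constructors, let f⃗ be a list of formulas, let a_1,…,a_c be abstract values, and let σ be an assignment such that the bit string obtained by evaluating f⃗ under σ has a prefix in S_c with numeric_c of that string equal to k. If decode_T(a_k, σ) is defined, then decode_T(merge_c(f⃗, a_1,…,a_c), σ) is defined and equals decode_T(a_k, σ). -/

import Mathlib

/-- Abstract values over propositional variables `V`: a list of (semantic) formulas
(the *flags*) together with a list of abstract values (the *arguments*). -/
inductive AVal (V : Type) : Type where
  | mk : List ((V → Bool) → Bool) → List (AVal V) → AVal V

/-- The flags of an abstract value. -/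
def AVal.flags {V : Type} : AVal V → List ((V → Bool) → Bool)
  | .mk f _ => f

/-- The arguments of an abstract value. -/
def AVal.args {V : Type} : AVal V → List (AVal V)
  | .mk _ a => a

/-- A signature: every type symbol `T` gets a nonempty finite list of constructors,
each given by its finite list of argument type symbols. -/
structure Signature (τ : Type) where
  ctors : τ → List (List τ)
  ctors_ne : ∀ T, ctors T ≠ []

/-- Untyped data terms; the first component is the (1-based) rank of the
constructor. -/
inductive Value : Type where
  | mk : ℕ → List Value → Value

/-- Well-typed concrete values of type `T`: `C_i(v_1, …, v_n)` where `C_i` is the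
`i`-th constructor of `T` with argument types `T_1, …, T_n` and each `v_j` is a
well-typed value of type `T_j`. -/
inductive WT {τ : Type} (sig : Signature τ) : τ → Value → Prop where
  | mk {T : τ} {i : ℕ} {argTys : List τ} {vals : List Value} :
      1 ≤ i → (sig.ctors T)[i - 1]? = some argTys →
      List.Forall₂ (WT sig) argTys vals → WT sig T (.mk i vals)

/-- `numeric n w = some i` iff `w` has a (unique) prefix `u ∈ S n` of lexicographic
rank `i` in `S n`; extra bits beyond the prefix are ignored. -/
def numeric : ℕ → List Bool → Option ℕ
  | 0, _ => none
  | 1, _ => some 1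
  | _ + 2, [] => none
  | n + 2, false :: w => numeric ((n + 2 + 1) / 2) w
  | n + 2, true :: w => (numeric ((n + 2) / 2) w).map (fun i => (n + 2 + 1) / 2 + i)
termination_by n _ => n
decreasing_by all_goals omega

/-- `strOf n i` is the element of `S n` of lexicographic rank `i` (for `1 ≤ i ≤ n`). -/
def strOf : ℕ → ℕ → List Bool
  | 0, _ => []
  | 1, _ => []
  | n + 2, i =>
      if i ≤ (n + 2 + 1) / 2 then false :: strOf ((n + 2 + 1) / 2) i
      else true :: strOf ((n + 2) / 2) (i - (n + 2 + 1) / 2)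
termination_by n _ => n
decreasing_by all_goals omega
mutual
  /-- Encoding of a concrete value of type `T` as an abstract value: the flags are
  constant formulas representing the rank-`i` element of `S c(T)`, and the arguments
  are the encodings of the constructor arguments at their respective types. -/
  def encode {V τ : Type} (sig : Signature τ) : τ → Value → AVal V
    | T, .mk i vals =>
        .mk ((strOf (sig.ctors T).length i).map (fun b => fun _ => b))
          (encodeList sig ((sig.ctors T).getD (i - 1) []) vals)
  termination_by _ v => sizeOf v

  /-- Pointwise encoding of a list of values at a list of types. -/
  def encodeList {V τ : Type} (sig : Signature τ) : List τ → List Value → List (AVal V)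
    | t :: ts, v :: vs => encode sig t v :: encodeList sig ts vs
    | _, _ => []
  termination_by _ vs => sizeOf vs
end

mutual
  /-- Decoding of an abstract value at type `T` under an assignment `σ` (a partial
  function): the flags are evaluated under `σ`; if the resulting bit string has a
  prefix in `S c(T)` determining constructor rank `i` of `T`, and there are enough
  arguments, the first arguments are decoded at the argument types of the `i`-th
  constructor of `T`; otherwise decoding is undefined. -/
  def decode {V τ : Type} (sig : Signature τ) : τ → AVal V → (V → Bool) → Option Value
    | T, .mk flags args, σ =>
        match numeric (sig.ctors T).length (flags.map (fun f => f σ)) with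
        | none => none
        | some i =>
            match (sig.ctors T)[i - 1]? with
            | none => none
            | some argTys =>
                if argTys.length ≤ args.length then
                  (decodeList sig argTys args σ).map (Value.mk i)
                else none
  termination_by _ a _ => sizeOf a

  /-- Pointwise decoding of (a prefix of) a list of abstract values at a list of
  types. -/
  def decodeList {V τ : Type} (sig : Signature τ) :
      List τ → List (AVal V) → (V → Bool) → Option (List Value)
    | [], _, _ => some []
    | _ :: _, [], _ => none
    | t :: ts, a :: as, σ =>
        match decode sig t a σ with
        | none => none
        | some v => (decodeList sig ts as σ).map (fun vs => v :: vs)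
  termination_by _ as _ => sizeOf as
end
lemma AVal.one_le_sizeOf_list {V : Type} (l : List (AVal V)) : 1 ≤ sizeOf l := by
  cases l <;> simp <;> omega

lemma AVal.sizeOf_getD_le {V : Type} (a : AVal V) (j : ℕ) :
    sizeOf (a.args.getD j (AVal.mk [] [])) ≤ sizeOf a := by
  cases a with
  | mk f args =>
      simp only [AVal.args]
      by_cases h : j < args.length
      · have hm : args.getD j (AVal.mk [] []) ∈ args := by
          rw [List.getD_eq_getElem _ _ h]; exact List.getElem_mem h
        have := List.sizeOf_lt_of_mem hm
        simp only [AVal.mk.sizeOf_spec]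
        have := AVal.one_le_sizeOf_list (V := V) []
        omega
      · rw [List.getD_eq_default _ _ (by omega)]
        simp only [AVal.mk.sizeOf_spec]
        have h1 : 1 ≤ sizeOf f := by cases f <;> simp <;> omega
        have h2 := AVal.one_le_sizeOf_list args
        have h3 := AVal.one_le_sizeOf_list (V := V) []
        simp at h3 ⊢
        omega

lemma AVal.sizeOf_getD_lt {V : Type} (a : AVal V) (j : ℕ) (h : j < a.args.length) :
    sizeOf (a.args.getD j (AVal.mk [] [])) < sizeOf a := by
  cases a with
  | mk f args =>
      simp only [AVal.args] at h ⊢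
      have hm : args.getD j (AVal.mk [] []) ∈ args := by
        rw [List.getD_eq_getElem _ _ h]; exact List.getElem_mem h
      have := List.sizeOf_lt_of_mem hm
      simp only [AVal.mk.sizeOf_spec]
      omega

lemma merge_dec {V : Type} (as : List (AVal V)) (j : ℕ)
    (hj : j < (as.map (fun a => a.args.length)).foldr max 0) :
    sizeOf (as.map (fun a => a.args.getD j (AVal.mk [] []))) < sizeOf as := by
  induction as with
  | nil => simp at hj
  | cons a as ih =>
      simp only [List.map_cons, List.foldr_cons] at hj
      simp only [List.map_cons, List.cons.sizeOf_spec]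
      rcases Nat.lt_or_ge j a.args.length with h | h
      · have h1 := AVal.sizeOf_getD_lt a j h
        have h2 : sizeOf (as.map (fun a => a.args.getD j (AVal.mk [] []))) ≤ sizeOf as := by
          rcases Nat.lt_or_ge j ((as.map (fun a => a.args.length)).foldr max 0) with h' | h'
          · exact Nat.le_of_lt (ih h')
          · clear ih hj; induction as with
            | nil => simp
            | cons b bs ihb =>
                simp only [List.map_cons, List.foldr_cons] at h' ⊢
                simp only [List.cons.sizeOf_spec]
                have := AVal.sizeOf_getD_le b j
                have := ihb (by omega)
                omega
        omega
      · have hj' : j < (as.map (fun a => a.args.length)).foldr max 0 := by omega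
        have := ih hj'
        have := AVal.sizeOf_getD_le a j
        omega

/-- The combining function `merge c f⃗ [a_1, …, a_c]`: its `i`-th flag is the
conjunction over `k` of the implications `numeric c f⃗ = k ⟹ flags_i(a_k)`, and its
`j`-th argument is `merge c f⃗` of the `j`-th arguments of the `a_k` (a missing
argument being the empty abstract value). -/
def merge {V : Type} (c : ℕ) (fs : List ((V → Bool) → Bool)) (as : List (AVal V)) :
    AVal V :=
  AVal.mk
    ((List.range ((as.map (fun a => a.flags.length)).foldr max 0)).map
      (fun i => fun σ =>
        match numeric c (fs.map (fun f => f σ)) with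
        | none => true
        | some k =>
            match as[k - 1]? with
            | none => true
            | some a =>
                match a.flags[i]? with
                | none => true
                | some g => g σ))
    ((List.range ((as.map (fun a => a.args.length)).foldr max 0)).attach.map
      (fun j => merge c fs (as.map (fun a => a.args.getD j.1 (AVal.mk [] [])))))
termination_by sizeOf as
decreasing_by
  have := merge_dec as j.1 (by simpa using j.2)
  simpa [List.map_attach_eq_pmap, List.pmap_eq_map] using this

lemma numeric_append : ∀ (n : ℕ) (w u : List Bool) (i : ℕ),
    numeric n w = some i → numeric n (w ++ u) = some i
  | 0, w, u, i, h => by simp [numeric] at h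
  | 1, w, u, i, h => by simpa [numeric] using h
  | n + 2, [], u, i, h => by simp [numeric] at h
  | n + 2, false :: w, u, i, h => by
      simp only [numeric, List.cons_append] at h ⊢
      exact numeric_append ((n + 2 + 1) / 2) w u i h
  | n + 2, true :: w, u, i, h => by
      simp only [numeric, List.cons_append, Option.map_eq_some_iff] at h ⊢
      obtain ⟨j, hj, rfl⟩ := h
      exact ⟨j, numeric_append ((n + 2) / 2) w u j hj, rfl⟩
termination_by n => n
decreasing_by all_goals omega

lemma le_foldr_max (l : List ℕ) (x : ℕ) (hx : x ∈ l) : x ≤ l.foldr max 0 := by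
  induction l with
  | nil => simp at hx
  | cons a l ih =>
      rcases List.mem_cons.1 hx with rfl | hx
      · exact le_max_left _ _
      · exact le_trans (ih hx) (le_max_right _ _)

lemma decodeList_spec {V τ : Type} (sig : Signature τ) (σ : V → Bool) :
    ∀ (ts : List τ) (xs : List (AVal V)) (vs : List Value),
      decodeList sig ts xs σ = some vs →
      vs.length = ts.length ∧
      ∀ (j : ℕ) (t : τ), ts[j]? = some t →
        ∃ x, xs[j]? = some x ∧ ∃ w, vs[j]? = some w ∧ decode sig t x σ = some w := by
  intro ts
  induction ts with
  | nil =>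
      intro xs vs h
      rw [decodeList] at h
      cases h
      exact ⟨rfl, by simp⟩
  | cons t ts ih =>
      intro xs vs h
      cases xs with
      | nil => rw [decodeList] at h; cases h
      | cons x xs =>
          rw [decodeList] at h
          cases hd : decode sig t x σ with
          | none => rw [hd] at h; cases h
          | some w =>
              rw [hd] at h
              simp only [Option.map_eq_some_iff] at h
              obtain ⟨vs', hvs', rfl⟩ := h
              obtain ⟨hlen, hpt⟩ := ih xs vs' hvs'
              refine ⟨by simp [hlen], ?_⟩
              intro j s hs
              cases j with
              | zero =>
                  simp only [List.getElem?_cons_zero, Option.some.injEq] at hs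
                  subst hs
                  exact ⟨x, by simp, w, by simp, hd⟩
              | succ j =>
                  simp only [List.getElem?_cons_succ] at hs ⊢
                  exact hpt j s hs

lemma decodeList_of_pointwise {V τ : Type} (sig : Signature τ) (σ : V → Bool) :
    ∀ (ts : List τ) (ys : List (AVal V)) (vs : List Value),
      vs.length = ts.length →
      (∀ (j : ℕ) (t : τ), ts[j]? = some t →
        ∃ y, ys[j]? = some y ∧ ∃ w, vs[j]? = some w ∧ decode sig t y σ = some w) →
      decodeList sig ts ys σ = some vs := by
  intro ts
  induction ts with
  | nil =>
      intro ys vs hlen _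
      cases vs with
      | nil => rw [decodeList]
      | cons w vs => simp at hlen
  | cons t ts ih =>
      intro ys vs hlen hpt
      obtain ⟨y, hy, w, hw, hd⟩ := hpt 0 t (by simp)
      cases ys with
      | nil => simp at hy
      | cons y' ys =>
          simp only [List.getElem?_cons_zero, Option.some.injEq] at hy
          subst hy
          cases vs with
          | nil => simp at hw
          | cons w' vs =>
              simp only [List.getElem?_cons_zero, Option.some.injEq] at hw
              subst hw
              rw [decodeList, hd, ih ys vs (by simpa using hlen)
                (fun j s hs => by simpa using hpt (j + 1) s (by simpa using hs))]
              rfl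

lemma decode_mk {V τ : Type} (sig : Signature τ) (T : τ)
    (flags : List ((V → Bool) → Bool)) (args : List (AVal V)) (σ : V → Bool)
    (i : ℕ) (argTys : List τ) (vs : List Value)
    (h1 : numeric (sig.ctors T).length (flags.map (fun f => f σ)) = some i)
    (h2 : (sig.ctors T)[i - 1]? = some argTys)
    (h3 : argTys.length ≤ args.length)
    (h4 : decodeList sig argTys args σ = some vs) :
    decode sig T (AVal.mk flags args) σ = some (Value.mk i vs) := by
  simp only [decode, h1, h2, h3, if_true, h4, Option.map_some]

lemma merge_decode_aux {V τ : Type} (sig : Signature τ) (c k : ℕ)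
    (fs : List ((V → Bool) → Bool)) (σ : V → Bool)
    (hk : numeric c (fs.map (fun f => f σ)) = some k) :
    ∀ (n : ℕ) (b : AVal V), sizeOf b < n → ∀ (T : τ) (as : List (AVal V)),
      as[k - 1]? = some b → ∀ v, decode sig T b σ = some v →
      decode sig T (merge c fs as) σ = some v := by
  intro n
  induction n with
  | zero => intro b hb; omega
  | succ n ih =>
      intro b hb T as hak v h
      obtain ⟨bflags, bargs⟩ := b
      have hmem : AVal.mk bflags bargs ∈ as := by
        have hlt : k - 1 < as.length := by
          by_contra hc
          rw [List.getElem?_eq_none (by omega)] at hak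
          cases hak
        rw [List.getElem?_eq_getElem hlt, Option.some.injEq] at hak
        exact hak ▸ List.getElem_mem hlt
      rw [decode] at h
      split at h
      · cases h
      next i hnum =>
        split at h
        · cases h
        next argTys hct =>
          split at h
          · next hle =>
              simp only [Option.map_eq_some_iff] at h
              obtain ⟨vs, hvs, rfl⟩ := h
              obtain ⟨hvslen, hspec⟩ := decodeList_spec sig σ argTys bargs vs hvs
              have hbfm : bflags.length ≤ (as.map (fun a => a.flags.length)).foldr max 0 :=
                le_foldr_max _ _ (List.mem_map.2 ⟨_, hmem, rfl⟩)
              have hbaM : bargs.length ≤ (as.map (fun a => a.args.length)).foldr max 0 :=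
                le_foldr_max _ _ (List.mem_map.2 ⟨_, hmem, rfl⟩)
              rw [merge]
              refine decode_mk sig T _ _ σ i argTys vs ?_ hct ?_ ?_
              · -- the evaluated merge flags extend the evaluated flags of b
                have hpre : (bflags.map (fun f => f σ)) <+:
                    (((List.range ((as.map (fun a => a.flags.length)).foldr max 0)).map
                      (fun i => fun σ' =>
                        match numeric c (fs.map (fun f => f σ')) with
                        | none => true
                        | some k =>
                            match as[k - 1]? with
                            | none => true
                            | some a =>
                                match a.flags[i]? with
                                | none => true
                                | some g => g σ')).map (fun f => f σ)) := by
                  rw [List.prefix_iff_eq_take]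
                  apply List.ext_getElem
                  · simp [hbfm]
                  · intro j h1 h2
                    simp only [List.length_map] at h1
                    simp only [List.getElem_take, List.getElem_map, List.getElem_range, hk, hak,
                      AVal.flags]
                    rw [List.getElem?_eq_getElem h1]
                obtain ⟨u, hu⟩ := hpre
                rw [← hu]
                exact numeric_append _ _ _ _ hnum
              · simp only [List.length_map, List.length_attach, List.length_range]
                omega
              · apply decodeList_of_pointwise sig σ _ _ _ hvslen
                intro j t ht
                have hj : j < argTys.length := by
                  by_contra hc
                  rw [List.getElem?_eq_none (by omega)] at ht
                  cases ht
                have hjM : j < (as.map (fun a => a.args.length)).foldr max 0 := by omega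
                obtain ⟨x, hx, w, hw, hdx⟩ := hspec j t ht
                refine ⟨_, List.getElem?_eq_getElem (by simpa using hjM), w, hw, ?_⟩
                have hxmem : x ∈ bargs := by
                  obtain ⟨h', rfl⟩ := List.getElem?_eq_some_iff.1 hx
                  exact List.getElem_mem h'
                have hxsz : sizeOf x < n := by
                  have := List.sizeOf_lt_of_mem hxmem
                  simp only [AVal.mk.sizeOf_spec] at hb
                  omega
                have hsel : (as.map (fun a => a.args.getD j (AVal.mk [] [])))[k - 1]?
                    = some x := by
                  rw [List.getElem?_map, hak]
                  simp only [Option.map_some, Option.some.injEq, AVal.args]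
                  rw [List.getD_eq_getElem?_getD, hx]
                  rfl
                have hd := ih x hxsz t _ hsel w hdx
                simpa [List.getElem_attach] using hd
          · cases h

/-- Decode correctness of `merge`: let `T` be a type symbol with `c = c(T)`
constructors, and suppose evaluating the flags `fs` under `σ` yields a bit string
with a prefix in `S c` of rank `k`.  If decoding `a_k` at `T` under `σ` is defined,
then decoding `merge c fs [a_1, …, a_c]` at `T` under `σ` is defined and yields the
same concrete value. -/
theorem merge_decode_correct {V τ : Type} (sig : Signature τ) (T : τ)
    (fs : List ((V → Bool) → Bool)) (as : List (AVal V))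
    (hlen : as.length = (sig.ctors T).length)
    (σ : V → Bool) (k : ℕ)
    (hk : numeric (sig.ctors T).length (fs.map (fun f => f σ)) = some k)
    (ak : AVal V) (hak : as[k - 1]? = some ak)
    (v : Value) (h : decode sig T ak σ = some v) :
    decode sig T (merge (sig.ctors T).length fs as) σ = some v :=
  merge_decode_aux sig (sig.ctors T).length k fs σ hk (sizeOf ak + 1) ak (by omega) T as hak v h
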